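/- For every τ in the complex upper half-plane, η(τ + 1/3)·η(τ + 2/3) = e^{2πi/24} · η(3τ)⁴ / (η(τ)·η(9τ)). -/

import Mathlib

open Complex Filter Topology

namespace EtaThirds

variable {q : ℂ}

lemma summable_log (hq : ‖q‖ < 1) (c : ℕ → ℂ) (hc : ∀ m, ‖c m‖ ≤ 1)
    (k : ℕ → ℕ) (hk : ∀ m, m + 1 ≤ k m) :
    Summable fun m => Complex.log (1 - c m * q ^ k m) := by
  have hq0 : (0:ℝ) ≤ ‖q‖ := norm_nonneg q
  have hb : ∀ m, ‖c m * q ^ k m‖ ≤ ‖q‖ ^ (m + 1) := by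
    intro m
    rw [norm_mul, norm_pow]
    calc ‖c m‖ * ‖q‖ ^ k m ≤ 1 * ‖q‖ ^ k m := by gcongr; exact hc m
      _ = ‖q‖ ^ k m := one_mul _
      _ ≤ ‖q‖ ^ (m + 1) := pow_le_pow_of_le_one hq0 hq.le (hk m)
  apply Summable.of_norm_bounded_eventually_nat (g := fun m => 2 * ‖q‖ ^ (m + 1))
  · exact (((summable_geometric_of_lt_one hq0 hq).mul_left (2 * ‖q‖)).congr
      (fun m => by rw [pow_succ']; ring))
  · have hto : Tendsto (fun m : ℕ => ‖q‖ ^ (m + 1)) atTop (𝓝 0) := by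
      exact (tendsto_pow_atTop_nhds_zero_of_lt_one hq0 hq).comp
        (tendsto_add_atTop_nat 1)
    filter_upwards [hto.eventually_lt_const (show (0:ℝ) < 1/2 by norm_num)] with m hm
    set z : ℂ := -(c m * q ^ k m) with hz
    have hzn : ‖z‖ ≤ ‖q‖ ^ (m + 1) := by rw [hz, norm_neg]; exact hb m
    have hz2 : ‖z‖ < 1/2 := lt_of_le_of_lt hzn hm
    have hz1 : ‖z‖ < 1 := by linarith
    have h1 : 1 - c m * q ^ k m = 1 + z := by rw [hz]; ring
    rw [h1]
    have := Complex.norm_log_one_add_le hz1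
    have hinv : (1 - ‖z‖)⁻¹ ≤ 2 := by
      rw [inv_le_comm₀ (by linarith) (by norm_num)]
      linarith
    have h2 : ‖z‖ ^ 2 * (1 - ‖z‖)⁻¹ / 2 + ‖z‖ ≤ 2 * ‖z‖ := by
      have h3 : ‖z‖ ^ 2 * (1 - ‖z‖)⁻¹ ≤ ‖z‖ * 1 := by
        calc ‖z‖ ^ 2 * (1 - ‖z‖)⁻¹ ≤ ‖z‖ ^ 2 * 2 := by gcongr
          _ ≤ ‖z‖ * 1 := by nlinarith [norm_nonneg z]
      linarith [norm_nonneg z]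
    calc ‖Complex.log (1 + z)‖ ≤ ‖z‖ ^ 2 * (1 - ‖z‖)⁻¹ / 2 + ‖z‖ := this
      _ ≤ 2 * ‖z‖ := h2
      _ ≤ 2 * ‖q‖ ^ (m + 1) := by linarith

lemma factor_ne_zero (hq : ‖q‖ < 1) {c : ℂ} (hc : ‖c‖ ≤ 1) {k : ℕ} (hk : 1 ≤ k) :
    1 - c * q ^ k ≠ 0 := by
  intro h
  have h1 : (1 : ℂ) = c * q ^ k := by linear_combination h
  have : (1:ℝ) ≤ ‖q‖ ^ k := by
    have := congrArg norm h1
    rw [norm_one, norm_mul, norm_pow] at this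
    nlinarith [norm_nonneg c, pow_nonneg (norm_nonneg q) k]
  have : ‖q‖ ^ k < 1 := pow_lt_one₀ (norm_nonneg q) hq (by omega)
  linarith

lemma multipliable_aux (hq : ‖q‖ < 1) (c : ℕ → ℂ) (hc : ∀ m, ‖c m‖ ≤ 1)
    (k : ℕ → ℕ) (hk : ∀ m, m + 1 ≤ k m) :
    Multipliable fun m => 1 - c m * q ^ k m := by
  exact Complex.multipliable_of_summable_log (summable_log hq c hc k hk)

lemma tprod_ne_zero (hq : ‖q‖ < 1) (c : ℕ → ℂ) (hc : ∀ m, ‖c m‖ ≤ 1)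
    (k : ℕ → ℕ) (hk : ∀ m, m + 1 ≤ k m) :
    (∏' m : ℕ, (1 - c m * q ^ k m)) ≠ 0 := by
  have h2 := Complex.cexp_tsum_eq_tprod (f := fun m => 1 - c m * q ^ k m)
    (fun m => factor_ne_zero hq (hc m) (by have := hk m; omega))
    (summable_log hq c hc k hk)
  beta_reduce at h2
  rw [← h2]
  exact Complex.exp_ne_zero _

lemma tprod_mod3 (f : ℕ → ℂ) (hf : Multipliable f)
    (h0 : Multipliable fun m => f (m * 3))
    (h1 : Multipliable fun m => f (m * 3 + 1))
    (h2 : Multipliable fun m => f (m * 3 + 2)) :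
    ∏' n : ℕ, f n =
      (∏' m : ℕ, f (m * 3)) * (∏' m : ℕ, f (m * 3 + 1)) * (∏' m : ℕ, f (m * 3 + 2)) := by
  have hmf : Multipliable (f ∘ (Nat.divModEquiv 3).symm) :=
    (Nat.divModEquiv 3).symm.multipliable_iff.mpr hf
  calc ∏' n : ℕ, f n = ∏' p : ℕ × Fin 3, f ((Nat.divModEquiv 3).symm p) :=
        ((Nat.divModEquiv 3).symm.tprod_eq f).symm
    _ = ∏' (m : ℕ) (i : Fin 3), f ((Nat.divModEquiv 3).symm (m, i)) :=
        hmf.tprod_prod' (fun _ => Multipliable.of_finite)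
    _ = ∏' m : ℕ, (f (m * 3) * f (m * 3 + 1) * f (m * 3 + 2)) := by
        refine tprod_congr fun m => ?_
        rw [tprod_fintype]
        simp [Nat.divModEquiv, Fin.prod_univ_three]
    _ = (∏' m : ℕ, (f (m * 3) * f (m * 3 + 1))) * ∏' m : ℕ, f (m * 3 + 2) :=
        (h0.mul h1).tprod_mul h2
    _ = (∏' m : ℕ, f (m * 3)) * (∏' m : ℕ, f (m * 3 + 1)) * ∏' m : ℕ, f (m * 3 + 2) := by
        rw [h0.tprod_mul h1]

lemma split_eta (q c : ℂ) (hq : ‖q‖ < 1) (hc : ‖c‖ = 1) (hc3 : c ^ 3 = 1) :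
    ∏' n : ℕ, (1 - c ^ (n + 1) * q ^ (n + 1)) =
      (∏' m : ℕ, (1 - c * q ^ (m * 3 + 1))) * (∏' m : ℕ, (1 - c ^ 2 * q ^ (m * 3 + 2))) *
        (∏' m : ℕ, (1 - q ^ (m * 3 + 3))) := by
  have hcn : ∀ n : ℕ, ‖c ^ n‖ ≤ 1 := fun n => by rw [norm_pow, hc, one_pow]
  have hpow : ∀ m : ℕ, c ^ (m * 3) = 1 := fun m => by rw [mul_comm, pow_mul, hc3, one_pow]
  rw [tprod_mod3 (fun n => 1 - c ^ (n + 1) * q ^ (n + 1))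
    (multipliable_aux hq (fun n => c ^ (n + 1)) (fun n => hcn _) (fun n => n + 1)
      (fun n => le_refl _))
    (multipliable_aux hq (fun m => c ^ (m * 3 + 1)) (fun m => hcn _) (fun m => m * 3 + 1)
      (fun m => by beta_reduce; omega))
    (multipliable_aux hq (fun m => c ^ (m * 3 + 1 + 1)) (fun m => hcn _) (fun m => m * 3 + 1 + 1)
      (fun m => by beta_reduce; omega))
    (multipliable_aux hq (fun m => c ^ (m * 3 + 2 + 1)) (fun m => hcn _) (fun m => m * 3 + 2 + 1)
      (fun m => by beta_reduce; omega))]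
  congr 1
  · congr 1
    · exact tprod_congr fun m => by rw [pow_add, hpow, one_mul, pow_one]
    · refine tprod_congr fun m => ?_
      have h : m * 3 + 1 + 1 = m * 3 + 2 := by omega
      rw [h, pow_add, hpow, one_mul]
  · refine tprod_congr fun m => ?_
    have h : m * 3 + 2 + 1 = m * 3 + 3 := by omega
    rw [h, pow_add, hpow, one_mul, hc3, one_mul]

lemma triple (hq : ‖q‖ < 1) {w : ℂ} (hw : ‖w‖ = 1) (hw3 : w ^ 3 = 1)
    (hws : 1 + w + w ^ 2 = 0) (j : ℕ → ℕ) (hj : ∀ m, m + 1 ≤ j m) :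
    (∏' m : ℕ, (1 - w * q ^ j m)) * (∏' m : ℕ, (1 - w ^ 2 * q ^ j m)) *
        (∏' m : ℕ, (1 - q ^ j m)) = ∏' m : ℕ, (1 - q ^ (3 * j m)) := by
  have hw2 : ‖w ^ 2‖ ≤ 1 := by rw [norm_pow, hw, one_pow]
  have M1 : Multipliable fun m => 1 - w * q ^ j m :=
    multipliable_aux hq (fun _ => w) (fun _ => hw.le) j hj
  have M2 : Multipliable fun m => 1 - w ^ 2 * q ^ j m :=
    multipliable_aux hq (fun _ => w ^ 2) (fun _ => hw2) j hj
  have M3 : Multipliable fun m => 1 - q ^ j m :=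
    (multipliable_aux hq (fun _ => 1) (fun _ => norm_one.le) j hj).congr fun m => by
      rw [one_mul]
  rw [← M1.tprod_mul M2, ← (M1.mul M2).tprod_mul M3]
  refine tprod_congr fun m => ?_
  rw [show 3 * j m = j m * 3 by ring, pow_mul]
  linear_combination ((q ^ j m) ^ 2 - q ^ j m) * hws +
    ((q ^ j m) ^ 2 - (q ^ j m) ^ 3) * hw3

lemma key (hq : ‖q‖ < 1) {w : ℂ} (hw : ‖w‖ = 1) (hw3 : w ^ 3 = 1)
    (hws : 1 + w + w ^ 2 = 0) :
    (∏' n : ℕ, (1 - w ^ (n + 1) * q ^ (n + 1))) *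
        (∏' n : ℕ, (1 - (w ^ 2) ^ (n + 1) * q ^ (n + 1))) *
        ((∏' n : ℕ, (1 - q ^ (n + 1))) * (∏' n : ℕ, (1 - (q ^ 9) ^ (n + 1)))) =
      (∏' n : ℕ, (1 - (q ^ 3) ^ (n + 1))) ^ 4 := by
  have hq0 : (0:ℝ) ≤ ‖q‖ := norm_nonneg q
  have hq3 : ‖q ^ 3‖ < 1 := by rw [norm_pow]; exact pow_lt_one₀ hq0 hq (by norm_num)
  have hw2 : ‖w ^ 2‖ = 1 := by rw [norm_pow, hw, one_pow]
  have hw23 : (w ^ 2) ^ 3 = 1 := by linear_combination (w ^ 3 + 1) * hw3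
  set x1 := ∏' m : ℕ, (1 - w * q ^ (m * 3 + 1)) with hx1d
  set x2 := ∏' m : ℕ, (1 - w ^ 2 * q ^ (m * 3 + 2)) with hx2d
  set x3 := ∏' m : ℕ, (1 - q ^ (m * 3 + 3)) with hx3d
  set y1 := ∏' m : ℕ, (1 - w ^ 2 * q ^ (m * 3 + 1)) with hy1d
  set y2 := ∏' m : ℕ, (1 - w * q ^ (m * 3 + 2)) with hy2d
  set p1 := ∏' m : ℕ, (1 - q ^ (m * 3 + 1)) with hp1d
  set p2 := ∏' m : ℕ, (1 - q ^ (m * 3 + 2)) with hp2d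
  set r1 := ∏' m : ℕ, (1 - q ^ (3 * (m * 3 + 1))) with hr1d
  set r2 := ∏' m : ℕ, (1 - q ^ (3 * (m * 3 + 2))) with hr2d
  set D := ∏' n : ℕ, (1 - (q ^ 9) ^ (n + 1)) with hDd
  have Mone : ∀ (k : ℕ → ℕ), (∀ m, m + 1 ≤ k m) → Multipliable (fun m => 1 - q ^ k m) :=
    fun k hk => (multipliable_aux hq (fun _ => 1) (fun _ => norm_one.le) k hk).congr
      fun m => by rw [one_mul]
  have Mone3 : ∀ (k : ℕ → ℕ), (∀ m, m + 1 ≤ k m) → Multipliable (fun m => 1 - (q ^ 3) ^ k m) :=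
    fun k hk => (multipliable_aux hq3 (fun _ => 1) (fun _ => norm_one.le) k hk).congr
      fun m => by rw [one_mul]
  have hAx : (∏' n : ℕ, (1 - w ^ (n + 1) * q ^ (n + 1))) = x1 * x2 * x3 :=
    split_eta q w hq hw hw3
  have hBmid : (∏' m : ℕ, (1 - (w ^ 2) ^ 2 * q ^ (m * 3 + 2))) = y2 :=
    tprod_congr fun m => by rw [show (w ^ 2) ^ 2 = w by linear_combination w * hw3]
  have hBx : (∏' n : ℕ, (1 - (w ^ 2) ^ (n + 1) * q ^ (n + 1))) = y1 * y2 * x3 := by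
    rw [split_eta q (w ^ 2) hq hw2 hw23, hBmid]
  have hCx : (∏' n : ℕ, (1 - q ^ (n + 1))) = p1 * p2 * x3 := by
    rw [tprod_mod3 (fun n => 1 - q ^ (n + 1)) (Mone (fun n => n + 1) fun n => le_refl _)
      (Mone (fun m => m * 3 + 1) fun m => by beta_reduce; omega)
      (Mone (fun m => m * 3 + 1 + 1) fun m => by beta_reduce; omega)
      (Mone (fun m => m * 3 + 2 + 1) fun m => by beta_reduce; omega)]
  have hEx : (∏' n : ℕ, (1 - (q ^ 3) ^ (n + 1))) = x3 :=
    tprod_congr fun n => by rw [← pow_mul, show 3 * (n + 1) = n * 3 + 3 by ring]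
  have hE4 : (∏' n : ℕ, (1 - (q ^ 3) ^ (n + 1))) = r1 * r2 * D := by
    rw [tprod_mod3 (fun n => 1 - (q ^ 3) ^ (n + 1)) (Mone3 (fun n => n + 1) fun n => le_refl _)
      (Mone3 (fun m => m * 3 + 1) fun m => by beta_reduce; omega)
      (Mone3 (fun m => m * 3 + 1 + 1) fun m => by beta_reduce; omega)
      (Mone3 (fun m => m * 3 + 2 + 1) fun m => by beta_reduce; omega)]
    congr 1
    · congr 1
      · exact tprod_congr fun m => by rw [← pow_mul]
      · exact tprod_congr fun m => by
          rw [← pow_mul, show 3 * (m * 3 + 1 + 1) = 3 * (m * 3 + 2) by ring]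
    · exact tprod_congr fun m => by
        rw [← pow_mul, show 3 * (m * 3 + 2 + 1) = 9 * (m + 1) by ring, pow_mul]
  have T1 : x1 * y1 * p1 = r1 :=
    triple hq hw hw3 hws (fun m => m * 3 + 1) (fun m => by beta_reduce; omega)
  have T2 : x2 * y2 * p2 = r2 := by
    have := triple hq hw hw3 hws (fun m => m * 3 + 2) (fun m => by beta_reduce; omega)
    linear_combination this
  have hx3r : r1 * r2 * D = x3 := by rw [← hE4, hEx]
  rw [hAx, hBx, hCx, hEx]
  linear_combination (x2 * y2 * p2 * x3 ^ 3 * D) * T1 + (r1 * x3 ^ 3 * D) * T2 +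
    x3 ^ 3 * hx3r

lemma exp_coeff_pow (z : ℂ) (l : ℕ) :
    Complex.exp (((l : ℂ) + 1) * z) = Complex.exp z ^ (l + 1) := by
  rw [show ((l : ℂ) + 1) = ((l + 1 : ℕ) : ℂ) by push_cast; ring, Complex.exp_nat_mul]

end EtaThirds

open EtaThirds

/-- The Dedekind eta function `η(τ) = e^{2πiτ/24} ∏_{ℓ≥1} (1 − e^{2πiℓτ})`. -/
noncomputable def dedekindEta (τ : ℂ) : ℂ :=
  Complex.exp (2 * Real.pi * Complex.I * τ / 24) *
    ∏' ℓ : ℕ, (1 - Complex.exp (2 * Real.pi * Complex.I * (ℓ + 1) * τ))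

/-- `η(τ + 1/3)·η(τ + 2/3) = e^{2πi/24} · η(3τ)⁴ / (η(τ)·η(9τ))`. -/
theorem dedekindEta_add_thirds (τ : ℂ) (hτ : 0 < τ.im) :
    dedekindEta (τ + 1 / 3) * dedekindEta (τ + 2 / 3) =
      Complex.exp (2 * Real.pi * Complex.I / 24) * dedekindEta (3 * τ) ^ 4 /
        (dedekindEta τ * dedekindEta (9 * τ)) := by
  have hπ : (0:ℝ) < Real.pi := Real.pi_pos
  set q : ℂ := Complex.exp (2 * Real.pi * Complex.I * τ) with hqd
  set w : ℂ := Complex.exp (2 * Real.pi * Complex.I / 3) with hwd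
  have hq : ‖q‖ < 1 := by
    rw [hqd, Complex.norm_exp]
    apply Real.exp_lt_one_iff.mpr
    have : (2 * (Real.pi : ℂ) * Complex.I * τ).re = -(2 * Real.pi * τ.im) := by
      simp [Complex.mul_re, Complex.mul_im]
    rw [this]
    nlinarith
  have hq0 : (0:ℝ) ≤ ‖q‖ := norm_nonneg q
  have hq9 : ‖q ^ 9‖ < 1 := by rw [norm_pow]; exact pow_lt_one₀ hq0 hq (by norm_num)
  have hw : ‖w‖ = 1 := by
    rw [hwd, Complex.norm_exp]
    have : (2 * (Real.pi : ℂ) * Complex.I / 3).re = 0 := by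
      simp [Complex.div_re, Complex.mul_re, Complex.mul_im]
    rw [this, Real.exp_zero]
  have hw3 : w ^ 3 = 1 := by
    rw [hwd, ← Complex.exp_nat_mul, show ((3:ℕ):ℂ) * (2 * Real.pi * Complex.I / 3)
      = 2 * Real.pi * Complex.I by push_cast; ring]
    exact Complex.exp_two_pi_mul_I
  have hwne : w ≠ 1 := by
    intro h
    obtain ⟨n, hn⟩ := Complex.exp_eq_one_iff.mp (hwd ▸ h)
    have hne : (2 * (Real.pi : ℂ) * Complex.I) ≠ 0 := by
      simp [Real.pi_ne_zero, Complex.I_ne_zero]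
    have h2 : (2 * (Real.pi : ℂ) * Complex.I) * (1 / 3) =
        (2 * (Real.pi : ℂ) * Complex.I) * n := by linear_combination hn
    have h3 : (1 / 3 : ℂ) = (n : ℂ) := mul_left_cancel₀ hne h2
    have h4 : ((1 : ℤ) : ℂ) = ((3 * n : ℤ) : ℂ) := by push_cast; linear_combination 3 * h3
    have h5 : (1 : ℤ) = 3 * n := Int.cast_injective h4
    omega
  have hws : 1 + w + w ^ 2 = 0 := by
    have h : (w - 1) * (1 + w + w ^ 2) = 0 := by linear_combination hw3
    rcases mul_eq_zero.mp h with h1 | h2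
    · exact absurd (by linear_combination h1) hwne
    · exact h2
  -- rewrite the four/five infinite products
  have hprodA : (∏' ℓ : ℕ, (1 - Complex.exp (2 * Real.pi * Complex.I * (ℓ + 1) * (τ + 1/3)))) =
      ∏' n : ℕ, (1 - w ^ (n + 1) * q ^ (n + 1)) := by
    refine tprod_congr fun ℓ => ?_
    rw [show 2 * (Real.pi : ℂ) * Complex.I * (ℓ + 1) * (τ + 1/3)
        = ((ℓ:ℂ) + 1) * (2 * Real.pi * Complex.I / 3) + ((ℓ:ℂ) + 1) * (2 * Real.pi * Complex.I * τ)
        by ring, Complex.exp_add, exp_coeff_pow, exp_coeff_pow]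
  have hprodB : (∏' ℓ : ℕ, (1 - Complex.exp (2 * Real.pi * Complex.I * (ℓ + 1) * (τ + 2/3)))) =
      ∏' n : ℕ, (1 - (w ^ 2) ^ (n + 1) * q ^ (n + 1)) := by
    refine tprod_congr fun ℓ => ?_
    rw [show 2 * (Real.pi : ℂ) * Complex.I * (ℓ + 1) * (τ + 2/3)
        = ((ℓ:ℂ) + 1) * (2 * (2 * Real.pi * Complex.I / 3)) + ((ℓ:ℂ) + 1) * (2 * Real.pi * Complex.I * τ)
        by ring, Complex.exp_add, exp_coeff_pow, exp_coeff_pow,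
      show Complex.exp (2 * (2 * Real.pi * Complex.I / 3)) = w ^ 2 by
        rw [show (2 : ℂ) * (2 * Real.pi * Complex.I / 3) = ((2:ℕ):ℂ) * (2 * Real.pi * Complex.I / 3)
          by push_cast; ring, Complex.exp_nat_mul]]
  have hprodC : (∏' ℓ : ℕ, (1 - Complex.exp (2 * Real.pi * Complex.I * (ℓ + 1) * τ))) =
      ∏' n : ℕ, (1 - q ^ (n + 1)) := by
    refine tprod_congr fun ℓ => ?_
    rw [show 2 * (Real.pi : ℂ) * Complex.I * (ℓ + 1) * τ
        = ((ℓ:ℂ) + 1) * (2 * Real.pi * Complex.I * τ) by ring, exp_coeff_pow]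
  have hprodE : (∏' ℓ : ℕ, (1 - Complex.exp (2 * Real.pi * Complex.I * (ℓ + 1) * (3 * τ)))) =
      ∏' n : ℕ, (1 - (q ^ 3) ^ (n + 1)) := by
    refine tprod_congr fun ℓ => ?_
    rw [show 2 * (Real.pi : ℂ) * Complex.I * (ℓ + 1) * (3 * τ)
        = ((3 * (ℓ + 1) : ℕ) : ℂ) * (2 * Real.pi * Complex.I * τ) by push_cast; ring,
      Complex.exp_nat_mul, pow_mul]
  have hprodD : (∏' ℓ : ℕ, (1 - Complex.exp (2 * Real.pi * Complex.I * (ℓ + 1) * (9 * τ)))) =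
      ∏' n : ℕ, (1 - (q ^ 9) ^ (n + 1)) := by
    refine tprod_congr fun ℓ => ?_
    rw [show 2 * (Real.pi : ℂ) * Complex.I * (ℓ + 1) * (9 * τ)
        = ((9 * (ℓ + 1) : ℕ) : ℂ) * (2 * Real.pi * Complex.I * τ) by push_cast; ring,
      Complex.exp_nat_mul, pow_mul]
  have hkey := key hq hw hw3 hws
  have hCne : (∏' n : ℕ, (1 - q ^ (n + 1))) ≠ 0 := by
    rw [tprod_congr (fun n : ℕ => by rw [one_mul] :
      ∀ n : ℕ, (1 - q ^ (n + 1)) = 1 - (1:ℂ) * q ^ (n + 1))]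
    exact tprod_ne_zero hq (fun _ => 1) (fun _ => norm_one.le) (fun n => n + 1) fun n => le_refl _
  have hDne : (∏' n : ℕ, (1 - (q ^ 9) ^ (n + 1))) ≠ 0 := by
    rw [tprod_congr (fun n : ℕ => by rw [one_mul] :
      ∀ n : ℕ, (1 - (q ^ 9) ^ (n + 1)) = 1 - (1:ℂ) * (q ^ 9) ^ (n + 1))]
    exact tprod_ne_zero hq9 (fun _ => 1) (fun _ => norm_one.le) (fun n => n + 1) fun n => le_refl _
  unfold dedekindEta
  rw [hprodA, hprodB, hprodC, hprodD, hprodE]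
  rw [eq_div_iff (by
    apply mul_ne_zero (mul_ne_zero (Complex.exp_ne_zero _) hCne)
      (mul_ne_zero (Complex.exp_ne_zero _) hDne))]
  have hexp : Complex.exp (2 * Real.pi * Complex.I * (τ + 1/3) / 24) *
      Complex.exp (2 * Real.pi * Complex.I * (τ + 2/3) / 24) *
      (Complex.exp (2 * Real.pi * Complex.I * τ / 24) *
        Complex.exp (2 * Real.pi * Complex.I * (9 * τ) / 24)) =
      Complex.exp (2 * Real.pi * Complex.I / 24) *
        Complex.exp (2 * Real.pi * Complex.I * (3 * τ) / 24) ^ 4 := by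
    rw [show Complex.exp (2 * Real.pi * Complex.I * (3 * τ) / 24) ^ 4
        = Complex.exp (((4:ℕ):ℂ) * (2 * Real.pi * Complex.I * (3 * τ) / 24))
        from (Complex.exp_nat_mul _ 4).symm,
      ← Complex.exp_add, ← Complex.exp_add, ← Complex.exp_add, ← Complex.exp_add]
    congr 1
    push_cast
    ring
  linear_combination ((∏' n : ℕ, (1 - w ^ (n + 1) * q ^ (n + 1))) *
      (∏' n : ℕ, (1 - (w ^ 2) ^ (n + 1) * q ^ (n + 1))) *
      ((∏' n : ℕ, (1 - q ^ (n + 1))) * (∏' n : ℕ, (1 - (q ^ 9) ^ (n + 1))))) * hexp +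
    (Complex.exp (2 * Real.pi * Complex.I / 24) *
      Complex.exp (2 * Real.pi * Complex.I * (3 * τ) / 24) ^ 4) * hkey
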